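/- With Q̃_{a,b}(X) defined as in the Q̃-polynomial formalism (extended to arbitrary pairs via Q̃_{a,b} = -Q̃_{b,a} for a ≠ b, and Q̃_{a,0} = Q̃_a), for all a ≥ b ≥ 0 one has Q̃_{a,b}(x₁,...,x_n) = Q̃_{a,b}(x₂,...,x_n) + x₁(Q̃_{a-1,b}(x₂,...,x_n) + Q̃_{a,b-1}(x₂,...,x_n)) + x₁² Q̃_{a-1,b-1}(x₂,...,x_n). -/

import Mathlib

open MvPolynomial

/-- The `i`-th elementary symmetric polynomial in the variables `{X j : j ∈ S}`,
i.e. `Q̃_i` on the variable set `S`. -/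
noncomputable def Qt (S : Finset ℕ) (i : ℕ) : MvPolynomial ℕ ℤ :=
  ∑ t ∈ Finset.powersetCard i S, ∏ j ∈ t, X j

/-- The two-row `Q̃`-polynomial
`Q̃_{i,j} = Q̃_i Q̃_j + 2 ∑_{k=1}^{j} (-1)^k Q̃_{i+k} Q̃_{j-k}` (for `i ≥ j`). -/
noncomputable def Qtp (S : Finset ℕ) (i j : ℕ) : MvPolynomial ℕ ℤ :=
  Qt S i * Qt S j +
    2 * ∑ k ∈ Finset.Icc 1 j, (-1 : MvPolynomial ℕ ℤ) ^ k * Qt S (i + k) * Qt S (j - k)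

/-- Fuel-based Laplace (Pfaffian) recursion for `Q̃_λ` on a list of parts of even
length: `Q̃_ν = ∑_{j} (-1)^{j-1} Q̃_{ν_j,ν_r} Q̃_{ν∖{ν_j,ν_r}}`. -/
noncomputable def Qpf (S : Finset ℕ) : ℕ → List ℕ → MvPolynomial ℕ ℤ
  | 0, _ => 1
  | fuel + 1, l =>
    if l.length < 2 then 1
    else
      ∑ j ∈ Finset.range (l.length - 1),
        (-1 : MvPolynomial ℕ ℤ) ^ j * Qtp S (l.getD j 0) (l.getLast?.getD 0) *
          Qpf S fuel (l.dropLast.eraseIdx j)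

/-- `Q̃_λ` for a partition `λ` (list of parts), padding with a zero part
to make the length even. -/
noncomputable def Qlam (S : Finset ℕ) (l : List ℕ) : MvPolynomial ℕ ℤ :=
  Qpf S (l.length + 1) (if Even l.length then l else l ++ [0])

/-- `Q̃_i` with integer index, vanishing for `i < 0`. -/
noncomputable def QtZ (S : Finset ℕ) (i : ℤ) : MvPolynomial ℕ ℤ :=
  if 0 ≤ i then Qt S i.toNat else 0

/-- `Q̃_{i,j}` with integer indices (`i ≥ j`), vanishing when an index is negative. -/
noncomputable def QtpZ (S : Finset ℕ) (i j : ℤ) : MvPolynomial ℕ ℤ :=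
  QtZ S i * QtZ S j +
    2 * ∑ k ∈ Finset.Icc 1 j.toNat,
      (-1 : MvPolynomial ℕ ℤ) ^ k * QtZ S (i + k) * QtZ S (j - k)

/-- The recursion `Q̃_{a,b}(x₁,…,x_n) = Q̃_{a,b}(X') + x₁(Q̃_{a-1,b}(X') + Q̃_{a,b-1}(X'))
 + x₁² Q̃_{a-1,b-1}(X')` for `a ≥ b ≥ 0`, where `X' = (x₂,…,x_n)`.
Here `x₁ = X 0` and `X' = {X 1, …, X (n-1)}`. -/
lemma Qt_rec (n : ℕ) (hn : 1 ≤ n) (j : ℕ) :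
    Qt (Finset.range n) (j+1) = Qt (Finset.Ico 1 n) (j+1) + X 0 * Qt (Finset.Ico 1 n) j := by
  have h0 : (0:ℕ) ∉ Finset.Ico 1 n := by simp
  have hins : insert 0 (Finset.Ico 1 n) = Finset.range n := by
    rw [Finset.range_eq_Ico]
    exact Finset.insert_Ico_add_one_left_eq_Ico hn
  rw [← hins, Qt, Finset.powersetCard_succ_insert h0]
  have hdisj : Disjoint (Finset.powersetCard (j+1) (Finset.Ico 1 n))
      ((Finset.powersetCard j (Finset.Ico 1 n)).image (insert 0)) := by
    rw [Finset.disjoint_right]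
    intro t ht ht'
    simp only [Finset.mem_image] at ht
    obtain ⟨u, hu, rfl⟩ := ht
    have := (Finset.mem_powersetCard.mp ht').1 (Finset.mem_insert_self 0 u)
    exact h0 this
  rw [Finset.sum_union hdisj]
  congr 1
  rw [Finset.sum_image]
  · rw [Qt, Finset.mul_sum]
    apply Finset.sum_congr rfl
    intro t ht
    have h0t : 0 ∉ t := fun h => h0 ((Finset.mem_powersetCard.mp ht).1 h)
    rw [Finset.prod_insert h0t]
  · intro t ht u hu h
    have h0t : 0 ∉ t := fun h => h0 ((Finset.mem_powersetCard.mp ht).1 h)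
    have h0u : 0 ∉ u := fun h => h0 ((Finset.mem_powersetCard.mp hu).1 h)
    have := congrArg (Finset.erase · 0) h
    simpa [Finset.erase_insert, h0t, h0u] using this

lemma QtZ_rec (n : ℕ) (hn : 1 ≤ n) (i : ℤ) :
    QtZ (Finset.range n) i = QtZ (Finset.Ico 1 n) i + X 0 * QtZ (Finset.Ico 1 n) (i-1) := by
  rcases lt_trichotomy i 0 with h | h | h
  · rw [QtZ, QtZ, QtZ, if_neg (by omega), if_neg (by omega), if_neg (by omega)]; ring
  · subst h
    rw [QtZ, QtZ, QtZ, if_pos le_rfl, if_pos le_rfl, if_neg (by omega)]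
    simp [Qt]
  · obtain ⟨j, rfl⟩ : ∃ j : ℕ, i = (j:ℤ)+1 := ⟨(i-1).toNat, by omega⟩
    rw [QtZ, QtZ, QtZ, if_pos (by omega), if_pos (by omega), if_pos (by omega)]
    have h1 : ((j:ℤ)+1).toNat = j+1 := by omega
    have h2 : ((j:ℤ)+1-1).toNat = j := by omega
    rw [h1, h2, Qt_rec n hn j]

lemma key_sum {R : Type*} [CommRing R] (e : ℤ → R) (x : R) (a : ℤ) (m : ℕ) (h0 : e (-1) = 0) :
    ∑ k ∈ Finset.Icc 1 m,
        (-1:R)^k * (e (a+↑k) + x * e (a+↑k-1)) * (e (↑m-↑k) + x * e (↑m-↑k-1))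
    = (∑ k ∈ Finset.Icc 1 m, (-1:R)^k * e (a+↑k) * e (↑m-↑k))
      + x * (∑ k ∈ Finset.Icc 1 m, (-1:R)^k * e (a-1+↑k) * e (↑m-↑k))
      + (x * (∑ k ∈ Finset.Icc 1 (m-1), (-1:R)^k * e (a+↑k) * e (↑m-1-↑k))
      + x^2 * (∑ k ∈ Finset.Icc 1 (m-1), (-1:R)^k * e (a-1+↑k) * e (↑m-1-↑k))) := by
  have hdrop : ∀ f : ℕ → R, f m = 0 →
      ∑ k ∈ Finset.Icc 1 m, f k = ∑ k ∈ Finset.Icc 1 (m-1), f k := by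
    intro f hf
    cases m with
    | zero => simp
    | succ m' =>
      have hins : Finset.Icc 1 (m'+1) = insert (m'+1) (Finset.Icc 1 m') := by
        ext y; simp [Finset.mem_Icc]; omega
      rw [hins, Finset.sum_insert (by simp), hf, zero_add, Nat.add_sub_cancel]
  have expand : ∀ k ∈ Finset.Icc 1 m,
      (-1:R)^k * (e (a+↑k) + x * e (a+↑k-1)) * (e (↑m-↑k) + x * e (↑m-↑k-1))
      = (-1:R)^k * e (a+↑k) * e (↑m-↑k) + x * ((-1:R)^k * e (a-1+↑k) * e (↑m-↑k))
        + (x * ((-1:R)^k * e (a+↑k) * e (↑m-↑k-1))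
          + x^2 * ((-1:R)^k * e (a-1+↑k) * e (↑m-↑k-1))) := by
    intro k _
    rw [show a + (k:ℤ) - 1 = a - 1 + (k:ℤ) by ring]
    ring
  rw [Finset.sum_congr rfl expand, Finset.sum_add_distrib, Finset.sum_add_distrib,
    Finset.sum_add_distrib, ← Finset.mul_sum, ← Finset.mul_sum, ← Finset.mul_sum]
  have hC : (∑ k ∈ Finset.Icc 1 m, (-1:R)^k * e (a+↑k) * e (↑m-↑k-1))
      = ∑ k ∈ Finset.Icc 1 (m-1), (-1:R)^k * e (a+↑k) * e (↑m-1-↑k) := by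
    rw [hdrop _ (by rw [show (m:ℤ)-(m:ℤ)-1 = -1 by ring, h0, mul_zero])]
    exact Finset.sum_congr rfl fun k _ => by
      rw [show (m:ℤ)-(k:ℤ)-1 = (m:ℤ)-1-(k:ℤ) by ring]
  have hD : (∑ k ∈ Finset.Icc 1 m, (-1:R)^k * e (a-1+↑k) * e (↑m-↑k-1))
      = ∑ k ∈ Finset.Icc 1 (m-1), (-1:R)^k * e (a-1+↑k) * e (↑m-1-↑k) := by
    rw [hdrop _ (by rw [show (m:ℤ)-(m:ℤ)-1 = -1 by ring, h0, mul_zero])]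
    exact Finset.sum_congr rfl fun k _ => by
      rw [show (m:ℤ)-(k:ℤ)-1 = (m:ℤ)-1-(k:ℤ) by ring]
  rw [hC, hD]

theorem Qtp_first_variable_expansion (n : ℕ) (hn : 1 ≤ n) (a b : ℤ) (hb : 0 ≤ b) (hab : b ≤ a) :
    QtpZ (Finset.range n) a b
      = QtpZ (Finset.Ico 1 n) a b
        + X 0 * (QtpZ (Finset.Ico 1 n) (a - 1) b + QtpZ (Finset.Ico 1 n) a (b - 1))
        + (X 0) ^ 2 * QtpZ (Finset.Ico 1 n) (a - 1) (b - 1) := by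
  obtain ⟨m, rfl⟩ : ∃ m : ℕ, b = (m:ℤ) := ⟨b.toNat, by omega⟩
  have h1 : ((m:ℤ)-1).toNat = m-1 := by omega
  have h0 : QtZ (Finset.Ico 1 n) (-1) = 0 := by rw [QtZ, if_neg (by norm_num)]
  simp only [QtpZ, QtZ_rec n hn, Int.toNat_natCast, h1]
  rw [key_sum (QtZ (Finset.Ico 1 n)) (X 0) a m h0]
  ring
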